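/- Let G ≤ Aut(T) be a finitely generated regular branch group and let Q be a finite subgroup of G. Then the set of weakly maximal subgroups of G containing Q is uncountable. -/

import Mathlib

/-- Vertices of the `d`-regular rooted tree: finite words over `Fin d`. -/
abbrev Vtx (d : ℕ) := List (Fin d)

/-- A permutation of the vertex set is a tree automorphism if it fixes the root and
maps children of a vertex to children of its image. -/
def IsTreeAut (d : ℕ) (g : Equiv.Perm (Vtx d)) : Prop :=
  g [] = [] ∧ ∀ (v : Vtx d) (x : Fin d), ∃ y : Fin d, g (v ++ [x]) = g v ++ [y]

/-- The initial raySegment of length `n` of a boundary point `ξ : ℕ → Fin d`. -/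
def raySegment {d : ℕ} (ξ : ℕ → Fin d) (n : ℕ) : Vtx d := List.ofFn fun i : Fin n => ξ i

/-- The vertices at level `n`. -/
abbrev Level (d n : ℕ) := {v : Vtx d // v.length = n}

/-- A group of tree automorphisms is spherically transitive if it acts transitively on
each level. -/
def SphericallyTransitive {d : ℕ} (G : Subgroup (Equiv.Perm (Vtx d))) : Prop :=
  ∀ u v : Vtx d, u.length = v.length → ∃ g ∈ G, g u = v

/-- A group of tree automorphisms is self-similar if all sections of its elements
belong to it. -/
def SelfSimilar {d : ℕ} (G : Subgroup (Equiv.Perm (Vtx d))) : Prop :=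
  ∀ g ∈ G, ∀ v : Vtx d, ∃ h ∈ G, ∀ w : Vtx d, g (v ++ w) = g v ++ h w

/-- The image of `H ∩ Stab(n)` under the map `ψₙ` sending an automorphism fixing level `n`
to the tuple of its sections at the vertices of level `n`. -/
def psiImage {d : ℕ} (H : Subgroup (Equiv.Perm (Vtx d))) (n : ℕ) :
    Subgroup (Level d n → Equiv.Perm (Vtx d)) where
  carrier := {h | ∃ g ∈ H, (∀ v : Level d n, g v.1 = v.1) ∧
      ∀ (v : Level d n) (w : Vtx d), g (v.1 ++ w) = v.1 ++ h v w}
  one_mem' := ⟨1, H.one_mem, fun _ => rfl, fun _ _ => rfl⟩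
  mul_mem' := by
    rintro a b ⟨g, hg, hgf, hga⟩ ⟨g', hg', hg'f, hg'a⟩
    refine ⟨g * g', H.mul_mem hg hg', fun v => ?_, fun v w => ?_⟩
    · rw [Equiv.Perm.mul_apply, hg'f v, hgf v]
    · rw [Equiv.Perm.mul_apply, hg'a v w, hga v (b v w)]; rfl
  inv_mem' := by
    rintro a ⟨g, hg, hgf, hga⟩
    refine ⟨g⁻¹, H.inv_mem hg, fun v => ?_, fun v w => ?_⟩
    · apply g.injective
      rw [← Equiv.Perm.mul_apply, mul_inv_cancel, Equiv.Perm.one_apply, hgf v]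
    · apply g.injective
      rw [← Equiv.Perm.mul_apply, mul_inv_cancel, Equiv.Perm.one_apply, hga v (a⁻¹ v w)]
      show v.1 ++ w = v.1 ++ a v ((a v)⁻¹ w)
      rw [← Equiv.Perm.mul_apply, mul_inv_cancel, Equiv.Perm.one_apply]

/-- `G ≤ Aut(T)` is regular branch over `K` if it consists of tree automorphisms, is
spherically transitive and self-similar, and `K ≤ G` is a finite-index subgroup such that
`ψ₁(K ∩ Stab(1))` contains `K^d` as a subgroup of finite index. -/
structure IsRegularBranch (d : ℕ) (G K : Subgroup (Equiv.Perm (Vtx d))) : Prop where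
  treeAut : ∀ g ∈ G, IsTreeAut d g
  transitive : SphericallyTransitive G
  selfSimilar : SelfSimilar G
  le : K ≤ G
  relindex_ne_zero : K.relIndex G ≠ 0
  pi_le : Subgroup.pi Set.univ (fun _ : Level d 1 => K) ≤ psiImage K 1
  pi_relindex_ne_zero :
    (Subgroup.pi Set.univ (fun _ : Level d 1 => K)).relIndex (psiImage K 1) ≠ 0

/-- `H` is a weakly maximal subgroup of (the subgroup) `G` if `H ≤ G`, `H` has infinite
index in `G`, and every subgroup of `G` strictly containing `H` has finite index in `G`. -/
def IsWeaklyMaximalIn {P : Type*} [Group P] (G H : Subgroup P) : Prop :=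
  H ≤ G ∧ H.relIndex G = 0 ∧
    ∀ M : Subgroup P, M ≤ G → H < M → M.relIndex G ≠ 0

/-- The stabilizer in `G` of a boundary point `ξ` (a parabolic subgroup). -/
def rayStab {d : ℕ} (G : Subgroup (Equiv.Perm (Vtx d))) (ξ : ℕ → Fin d) :
    Subgroup (Equiv.Perm (Vtx d)) where
  carrier := {g | g ∈ G ∧ ∀ n : ℕ, g (raySegment ξ n) = raySegment ξ n}
  one_mem' := ⟨G.one_mem, fun _ => rfl⟩
  mul_mem' := by
    rintro a b ⟨ha, ha2⟩ ⟨hb, hb2⟩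
    exact ⟨G.mul_mem ha hb, fun n => by rw [Equiv.Perm.mul_apply, hb2 n, ha2 n]⟩
  inv_mem' := by
    rintro a ⟨ha, ha2⟩
    refine ⟨G.inv_mem ha, fun n => ?_⟩
    conv_lhs => rw [← ha2 n]
    exact Equiv.symm_apply_apply a (raySegment ξ n)

/-- The rigid stabilizer of a vertex `v` in `G`: elements of `G` fixing every vertex not
having `v` as a prefix. -/
def rist {d : ℕ} (G : Subgroup (Equiv.Perm (Vtx d))) (v : Vtx d) :
    Subgroup (Equiv.Perm (Vtx d)) where
  carrier := {g | g ∈ G ∧ ∀ w : Vtx d, ¬ v <+: w → g w = w}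
  one_mem' := ⟨G.one_mem, fun _ _ => rfl⟩
  mul_mem' := by
    rintro a b ⟨ha, ha2⟩ ⟨hb, hb2⟩
    exact ⟨G.mul_mem ha hb, fun w hw => by rw [Equiv.Perm.mul_apply, hb2 w hw, ha2 w hw]⟩
  inv_mem' := by
    rintro a ⟨ha, ha2⟩
    refine ⟨G.inv_mem ha, fun w hw => ?_⟩
    conv_lhs => rw [← ha2 w hw]
    exact Equiv.symm_apply_apply a w

theorem Equiv.Perm.apply_inv_self {α : Type*} (f : Equiv.Perm α) (x : α) : f (f⁻¹ x) = x :=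
  Equiv.apply_symm_apply f x

theorem Equiv.Perm.inv_apply_self {α : Type*} (f : Equiv.Perm α) (x : α) : f⁻¹ (f x) = x :=
  Equiv.symm_apply_apply f x

section TreeAux
variable {d : ℕ}

theorem treeaut_append {g : Equiv.Perm (Vtx d)} (hg : IsTreeAut d g) (u w : Vtx d) :
    ∃ w' : Vtx d, w'.length = w.length ∧ g (u ++ w) = g u ++ w' := by
  induction w using List.reverseRecOn with
  | nil => exact ⟨[], rfl, by simp⟩
  | append_singleton t x ih =>
      obtain ⟨w', hl, hw⟩ := ih
      obtain ⟨y, hy⟩ := hg.2 (u ++ t) x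
      exact ⟨w' ++ [y], by simp [hl],
        by rw [← List.append_assoc, hy, hw, List.append_assoc]⟩

theorem treeaut_length {g : Equiv.Perm (Vtx d)} (hg : IsTreeAut d g) (v : Vtx d) :
    (g v).length = v.length := by
  obtain ⟨w', hl, hw⟩ := treeaut_append hg [] v
  simpa [hg.1, hl] using congrArg List.length hw

theorem treeaut_prefix {g : Equiv.Perm (Vtx d)} (hg : IsTreeAut d g) {u v : Vtx d}
    (h : u <+: v) : g u <+: g v := by
  obtain ⟨t, rfl⟩ := h
  obtain ⟨w', _, hw⟩ := treeaut_append hg u t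
  exact ⟨w', hw.symm⟩

theorem treeaut_take {g : Equiv.Perm (Vtx d)} (hg : IsTreeAut d g) (v : Vtx d) (n : ℕ) :
    g (v.take n) = (g v).take n ∨ v.length ≤ n := by
  rcases le_or_gt v.length n with h | h
  · exact Or.inr h
  · left
    obtain ⟨w', hl, hw⟩ := treeaut_append hg (v.take n) (v.drop n)
    rw [List.take_append_drop] at hw
    have hlt : n ≤ (g (v.take n)).length := by
      rw [treeaut_length hg, List.length_take]; omega
    have hlt2 : (g (v.take n)).length ≤ n := by
      rw [treeaut_length hg, List.length_take]; omega
    rw [hw, List.take_append_of_le_length hlt, List.take_of_length_le hlt2]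

theorem treeaut_inv {g : Equiv.Perm (Vtx d)} (hg : IsTreeAut d g) : IsTreeAut d g⁻¹ := by
  constructor
  · have h1 := hg.1
    have := Equiv.Perm.inv_apply_self g ([] : Vtx d)
    rwa [h1] at this
  · intro v x
    have hlen : (g⁻¹ (v ++ [x])).length = v.length + 1 := by
      have := treeaut_length hg (g⁻¹ (v ++ [x]))
      rw [Equiv.Perm.apply_inv_self] at this
      simpa using this.symm
    have hne : g⁻¹ (v ++ [x]) ≠ [] := by intro h; rw [h] at hlen; simp at hlen
    obtain ⟨u', y, huy⟩ : ∃ u' y, g⁻¹ (v ++ [x]) = u' ++ [y] :=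
      ⟨_, _, (List.dropLast_append_getLast hne).symm⟩
    refine ⟨y, ?_⟩
    rw [huy]
    obtain ⟨y', hy'⟩ := hg.2 u' y
    have happ : g (u' ++ [y]) = v ++ [x] := by rw [← huy, Equiv.Perm.apply_inv_self]
    rw [huy] at hlen
    have hlen2 : v.length = (g u').length := by
      have := treeaut_length hg u'
      simp only [List.length_append, List.length_singleton] at hlen
      omega
    have hvx : v ++ [x] = g u' ++ [y'] := happ.symm.trans hy'
    have hvu : v = g u' := (List.append_inj hvx hlen2).1
    have hgu : u' = g⁻¹ v := by rw [hvu]; simp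
    rw [hgu]

theorem treeaut_fix_short (hd : 0 < d) {g : Equiv.Perm (Vtx d)} (hg : IsTreeAut d g) {n : ℕ}
    (hfix : ∀ v : Vtx d, v.length = n → g v = v) {u : Vtx d} (hu : u.length ≤ n) :
    g u = u := by
  set pad : Vtx d := List.replicate (n - u.length) ⟨0, hd⟩ with hpad
  have hlen : (u ++ pad).length = n := by simp [hpad]; omega
  obtain ⟨w', hl, hw⟩ := treeaut_append hg u pad
  have := hfix _ hlen
  rw [hw] at this
  have hlu : (g u).length = u.length := treeaut_length hg u
  exact (List.append_inj this hlu).1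
end TreeAux
section Generic

theorem monotone_bdd_stab {c : ℕ → ℕ} (hm : Monotone c) {B : ℕ} (hB : ∀ n, c n ≤ B) :
    ∃ N, ∀ m, N ≤ m → c m = c N := by
  have hbdd : BddAbove (Set.range c) := ⟨B, by rintro _ ⟨n, rfl⟩; exact hB n⟩
  obtain ⟨N, hN⟩ := Nat.sSup_mem (s := Set.range c) ⟨c 0, ⟨0, rfl⟩⟩ hbdd
  refine ⟨N, fun m hm' => le_antisymm ?_ (hm hm')⟩
  rw [hN]
  exact le_csSup hbdd ⟨m, rfl⟩

theorem index_comap_ne_zero' {A B : Type*} [Group A] [Group B] (f : A →* B)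
    {P : Subgroup B} (hP : P.index ≠ 0) : (P.comap f).index ≠ 0 := by
  have hfin : Finite (B ⧸ P) := Nat.finite_of_card_ne_zero hP
  have key : ∀ a b : A, @Setoid.r _ (QuotientGroup.leftRel (P.comap f)) a b →
      @Setoid.r _ (QuotientGroup.leftRel P) (f a) (f b) := by
    intro a b h
    rw [QuotientGroup.leftRel_apply] at h ⊢
    simpa using h
  let F : A ⧸ P.comap f → B ⧸ P := Quotient.map' f key
  have hinj : Function.Injective F := by
    intro x y
    induction x using Quotient.inductionOn'
    induction y using Quotient.inductionOn'
    rename_i a b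
    intro h
    have h2 := Quotient.exact' h
    rw [QuotientGroup.leftRel_apply] at h2
    apply Quotient.sound'
    rw [QuotientGroup.leftRel_apply]
    simpa using h2
  have : Finite (A ⧸ P.comap f) := Finite.of_injective F hinj
  exact Nat.card_ne_zero.mpr ⟨inferInstance, this⟩

theorem relindex_pi_ne_zero {η C : Type*} [Finite η] [Group C]
    {A B : Subgroup C} (h : A.relIndex B ≠ 0) :
    (Subgroup.pi Set.univ (fun _ : η => A)).relIndex
      (Subgroup.pi Set.univ (fun _ : η => B)) ≠ 0 := by
  classical
  set PA := Subgroup.pi Set.univ (fun _ : η => A)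
  set PB := Subgroup.pi Set.univ (fun _ : η => B)
  have hfin : Finite (B ⧸ A.subgroupOf B) := Nat.finite_of_card_ne_zero h
  let f : (η → B ⧸ A.subgroupOf B) → (PB ⧸ PA.subgroupOf PB) := fun c =>
    QuotientGroup.mk ⟨fun i => ((c i).out : B).1, by
      rw [Subgroup.mem_pi Set.univ]; exact fun i _ => ((c i).out).2⟩
  have hsurj : Function.Surjective f := by
    intro x
    induction x using Quotient.inductionOn'
    rename_i g
    refine ⟨fun i => QuotientGroup.mk ⟨g.1 i, ((Subgroup.mem_pi Set.univ).mp g.2) i (Set.mem_univ i)⟩, ?_⟩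
    show QuotientGroup.mk _ = Quotient.mk'' g
    rw [QuotientGroup.eq]
    rw [Subgroup.mem_subgroupOf, Subgroup.mem_pi Set.univ]
    intro i _
    have hout := Quotient.out_eq' (Quotient.mk''
      (⟨g.1 i, ((Subgroup.mem_pi Set.univ).mp g.2) i (Set.mem_univ i)⟩ : B) : B ⧸ A.subgroupOf B)
    have h2 := QuotientGroup.eq.mp hout
    rw [Subgroup.mem_subgroupOf] at h2
    simpa using h2
  have : Finite (PB ⧸ PA.subgroupOf PB) := Finite.of_surjective f hsurj
  exact Nat.card_ne_zero.mpr ⟨inferInstance, this⟩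

end Generic
section LevelSec
variable {d : ℕ}

def levelEquiv (d n : ℕ) : Level d n ≃ (Fin n → Fin d) where
  toFun v i := v.1.get (Fin.cast v.2.symm i)
  invFun f := ⟨List.ofFn f, List.length_ofFn (f := f)⟩
  left_inv v := by
    apply Subtype.ext
    apply List.ext_get (by simp [v.2])
    intro i h1 h2
    simp
  right_inv f := by funext i; simp

instance levelFintype (d n : ℕ) : Fintype (Level d n) :=
  Fintype.ofEquiv _ (levelEquiv d n).symm

theorem card_level (d n : ℕ) : Nat.card (Level d n) = d ^ n := by
  rw [Nat.card_eq_of_equiv_fin ((levelEquiv d n).trans (finFunctionFinEquiv))]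

/-- The section of a tree automorphism at a fixed vertex. -/
noncomputable def secFun (g : Equiv.Perm (Vtx d)) (v : Vtx d) : Vtx d → Vtx d :=
  fun w => (g (v ++ w)).drop v.length

theorem secFun_spec {g : Equiv.Perm (Vtx d)} (hg : IsTreeAut d g) {v : Vtx d}
    (hv : g v = v) (w : Vtx d) : g (v ++ w) = v ++ secFun g v w := by
  obtain ⟨w', hl, hw⟩ := treeaut_append hg v w
  rw [hw, hv, secFun]
  simp [hv, hw]

noncomputable def sectionPerm {g : Equiv.Perm (Vtx d)} (hg : IsTreeAut d g) {v : Vtx d}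
    (hv : g v = v) : Equiv.Perm (Vtx d) where
  toFun := secFun g v
  invFun := secFun g⁻¹ v
  left_inv := by
    intro w
    have hv' : g⁻¹ v = v := by
      conv_lhs => rw [← hv]
      exact Equiv.Perm.inv_apply_self g v
    have h1 := secFun_spec hg hv w
    have h2 := secFun_spec (treeaut_inv hg) hv' (secFun g v w)
    rw [← h1, Equiv.Perm.inv_apply_self] at h2
    exact (List.append_cancel_left h2).symm
  right_inv := by
    intro w
    have hv' : g⁻¹ v = v := by
      conv_lhs => rw [← hv]
      exact Equiv.Perm.inv_apply_self g v
    have h2 := secFun_spec (treeaut_inv hg) hv' w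
    have h1 := secFun_spec hg hv (secFun g⁻¹ v w)
    rw [← h2, Equiv.Perm.apply_inv_self] at h1
    exact (List.append_cancel_left h1).symm

theorem sectionPerm_spec {g : Equiv.Perm (Vtx d)} (hg : IsTreeAut d g) {v : Vtx d}
    (hv : g v = v) (w : Vtx d) : g (v ++ w) = v ++ sectionPerm hg hv w :=
  secFun_spec hg hv w

theorem sectionPerm_unique {g : Equiv.Perm (Vtx d)} (hg : IsTreeAut d g) {v : Vtx d}
    (hv : g v = v) {k : Equiv.Perm (Vtx d)} (hk : ∀ w, g (v ++ w) = v ++ k w) :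
    k = sectionPerm hg hv := by
  apply Equiv.ext
  intro w
  have := (hk w).symm.trans (sectionPerm_spec hg hv w)
  exact List.append_cancel_left this

end LevelSec
section Branch
variable {d : ℕ} {G K : Subgroup (Equiv.Perm (Vtx d))}

theorem realize_tuple (hGK : IsRegularBranch d G K) (t : Level d 1 → Equiv.Perm (Vtx d))
    (ht : ∀ u, t u ∈ K) :
    ∃ g ∈ K, (∀ u : Level d 1, g u.1 = u.1) ∧
      ∀ (u : Level d 1) (w : Vtx d), g (u.1 ++ w) = u.1 ++ t u w := by
  have hmem : t ∈ Subgroup.pi Set.univ (fun _ : Level d 1 => K) := by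
    rw [Subgroup.mem_pi Set.univ]; exact fun u _ => ht u
  obtain ⟨g, hgK, hfix, hact⟩ := hGK.pi_le hmem
  exact ⟨g, hgK, hfix, hact⟩

theorem ristK_realize (hGK : IsRegularBranch d G K) :
    ∀ (v : Vtx d), ∀ k ∈ K, ∃ g ∈ K, (∀ w, g (v ++ w) = v ++ k w) ∧
      ∀ w : Vtx d, ¬ v <+: w → g w = w := by
  intro v
  induction v with
  | nil =>
      intro k hk
      exact ⟨k, hk, fun w => by simp, fun w hw => absurd (List.nil_prefix) hw⟩
  | cons x v' ih =>
      intro k hk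
      classical
      obtain ⟨g', hg'K, hg'act, hg'fix⟩ := ih k hk
      set t : Level d 1 → Equiv.Perm (Vtx d) :=
        fun u => if u.1 = [x] then g' else 1 with ht
      obtain ⟨g, hgK, hfix, hact⟩ := realize_tuple hGK t (by
        intro u; by_cases h : u.1 = [x] <;> simp [ht, h, hg'K, K.one_mem])
      have hx : t ⟨[x], rfl⟩ = g' := by simp [ht]
      refine ⟨g, hgK, fun w => ?_, fun w hw => ?_⟩
      · have h1 := hact ⟨[x], rfl⟩ (v' ++ w)
        rw [hx] at h1
        rw [hg'act w] at h1
        simpa using h1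
      · match w with
        | [] => exact (hGK.treeAut g (hGK.le hgK)).1
        | y :: w' =>
            by_cases hxy : y = x
            · subst hxy
              have hnp : ¬ v' <+: w' := by
                intro h; exact hw (by simpa [List.cons_prefix_cons] using h)
              have h1 := hact ⟨[y], rfl⟩ w'
              rw [hx] at h1
              rw [hg'fix w' hnp] at h1
              simpa using h1
            · have h1 := hact ⟨[y], rfl⟩ w'
              have hy : t ⟨[y], rfl⟩ = 1 := by simp [ht, hxy]
              rw [hy] at h1
              simpa using h1

/-- The subgroup of elements of `K` fixing level `n` pointwise all whose level-`n`
sections lie in `K`. -/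
def LnSub (K : Subgroup (Equiv.Perm (Vtx d))) (n : ℕ) : Subgroup (Equiv.Perm (Vtx d)) where
  carrier := {g | g ∈ K ∧ (∀ v : Level d n, g v.1 = v.1) ∧
    ∀ v : Level d n, ∃ k ∈ K, ∀ w, g (v.1 ++ w) = v.1 ++ k w}
  one_mem' := ⟨K.one_mem, fun _ => rfl, fun _ => ⟨1, K.one_mem, fun _ => rfl⟩⟩
  mul_mem' := by
    rintro a b ⟨haK, haf, has⟩ ⟨hbK, hbf, hbs⟩
    refine ⟨K.mul_mem haK hbK,
      fun v => by rw [Equiv.Perm.mul_apply, hbf v, haf v], fun v => ?_⟩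
    obtain ⟨k, hk, hks⟩ := has v
    obtain ⟨k', hk', hks'⟩ := hbs v
    exact ⟨k * k', K.mul_mem hk hk', fun w => by
      rw [Equiv.Perm.mul_apply, hks' w, hks (k' w)]; rfl⟩
  inv_mem' := by
    rintro a ⟨haK, haf, has⟩
    refine ⟨K.inv_mem haK, fun v => ?_, fun v => ?_⟩
    · apply a.injective; rw [Equiv.Perm.apply_inv_self, haf v]
    · obtain ⟨k, hk, hks⟩ := has v
      refine ⟨k⁻¹, K.inv_mem hk, fun w => ?_⟩
      apply a.injective
      rw [Equiv.Perm.apply_inv_self, hks (k⁻¹ w)]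
      show v.1 ++ w = v.1 ++ k (k⁻¹ w)
      rw [Equiv.Perm.apply_inv_self]

theorem mem_LnSub {K : Subgroup (Equiv.Perm (Vtx d))} {n : ℕ} {g : Equiv.Perm (Vtx d)} :
    g ∈ LnSub K n ↔ g ∈ K ∧ (∀ v : Level d n, g v.1 = v.1) ∧
      ∀ v : Level d n, ∃ k ∈ K, ∀ w, g (v.1 ++ w) = v.1 ++ k w := Iff.rfl

theorem LnSub_le_K {n : ℕ} : LnSub K n ≤ K := fun _ h => h.1

theorem K_le_LnSub0 (hGK : IsRegularBranch d G K) : K ≤ LnSub K 0 := by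
  intro g hg
  refine ⟨hg, fun v => ?_, fun v => ⟨g, hg, fun w => ?_⟩⟩
  · have : v.1 = [] := List.length_eq_zero_iff.mp v.2
    rw [this]; exact (hGK.treeAut g (hGK.le hg)).1
  · have : v.1 = [] := List.length_eq_zero_iff.mp v.2
    simp [this]

end Branch
section Index
variable {d : ℕ} {G K : Subgroup (Equiv.Perm (Vtx d))}

theorem level_succ_decomp {n : ℕ} (u : Level d (n + 1)) :
    ∃ (v : Level d n) (x : Fin d), u.1 = v.1 ++ [x] := by
  have hne : u.1 ≠ [] := by
    intro h; have h2 := u.2; rw [h] at h2; simp at h2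
  refine ⟨⟨u.1.dropLast, ?_⟩, u.1.getLast hne, (List.dropLast_append_getLast hne).symm⟩
  have h2 := u.2
  rw [List.length_dropLast, h2]
  rfl

noncomputable def secTuple (hGK : IsRegularBranch d G K) (n : ℕ) (g : ↥(LnSub K n)) :
    Level d n → Equiv.Perm (Vtx d) :=
  fun v => sectionPerm (hGK.treeAut g.1 (hGK.le (LnSub_le_K g.2))) ((mem_LnSub.mp g.2).2.1 v)

theorem secTuple_spec (hGK : IsRegularBranch d G K) (n : ℕ) (g : ↥(LnSub K n))
    (v : Level d n) (w : Vtx d) : g.1 (v.1 ++ w) = v.1 ++ secTuple hGK n g v w :=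
  sectionPerm_spec _ _ _

theorem secTuple_eq (hGK : IsRegularBranch d G K) {n : ℕ} {g : ↥(LnSub K n)}
    {v : Level d n} {k : Equiv.Perm (Vtx d)} (hk : ∀ w, g.1 (v.1 ++ w) = v.1 ++ k w) :
    k = secTuple hGK n g v :=
  sectionPerm_unique _ _ hk

theorem secTuple_mem_K (hGK : IsRegularBranch d G K) (n : ℕ) (g : ↥(LnSub K n))
    (v : Level d n) : secTuple hGK n g v ∈ K := by
  obtain ⟨k, hk, hact⟩ := (mem_LnSub.mp g.2).2.2 v
  rwa [secTuple_eq hGK hact] at hk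

noncomputable def secHom (hGK : IsRegularBranch d G K) (n : ℕ) :
    ↥(LnSub K n) →* (Level d n → Equiv.Perm (Vtx d)) :=
  MonoidHom.mk' (secTuple hGK n) (by
    intro a b
    funext v
    refine (secTuple_eq hGK (fun w => ?_)).symm
    show (a.1 * b.1) (v.1 ++ w) = _
    rw [Equiv.Perm.mul_apply, secTuple_spec hGK n b v w, secTuple_spec hGK n a v _]
    rfl)

/-- Elements of `K` fixing level `n` pointwise. -/
def stabK (K : Subgroup (Equiv.Perm (Vtx d))) (n : ℕ) : Subgroup (Equiv.Perm (Vtx d)) where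
  carrier := {g | g ∈ K ∧ ∀ v : Level d n, g v.1 = v.1}
  one_mem' := ⟨K.one_mem, fun _ => rfl⟩
  mul_mem' := by
    rintro a b ⟨ha, ha2⟩ ⟨hb, hb2⟩
    exact ⟨K.mul_mem ha hb, fun v => by rw [Equiv.Perm.mul_apply, hb2 v, ha2 v]⟩
  inv_mem' := by
    rintro a ⟨ha, ha2⟩
    exact ⟨K.inv_mem ha, fun v => by
      apply a.injective; rw [Equiv.Perm.apply_inv_self, ha2 v]⟩

/-- Restriction of elements of `K` to level `n`. -/
def levelRestrict (hGK : IsRegularBranch d G K) (n : ℕ) :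
    ↥K →* Equiv.Perm (Level d n) :=
  MonoidHom.mk' (fun g =>
    { toFun := fun v => ⟨g.1 v.1, by
        rw [treeaut_length (hGK.treeAut g.1 (hGK.le g.2))]; exact v.2⟩
      invFun := fun v => ⟨g.1⁻¹ v.1, by
        rw [treeaut_length (treeaut_inv (hGK.treeAut g.1 (hGK.le g.2)))]; exact v.2⟩
      left_inv := fun v => by simp
      right_inv := fun v => by simp }) (by
    intro a b
    apply Equiv.ext
    intro v
    rfl)

theorem relindex_stabK (hGK : IsRegularBranch d G K) (n : ℕ) :
    (stabK K n).relIndex K ≠ 0 := by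
  have hker : (stabK K n).subgroupOf K = Subgroup.comap (levelRestrict hGK n) ⊥ := by
    ext g
    simp only [Subgroup.mem_subgroupOf, Subgroup.mem_comap, Subgroup.mem_bot]
    constructor
    · rintro ⟨-, h2⟩
      apply Equiv.ext
      intro v
      exact Subtype.ext (h2 v)
    · intro h
      refine ⟨g.2, fun v => ?_⟩
      have := congrArg (fun (e : Equiv.Perm (Level d n)) => (e v).1) h
      simpa [levelRestrict] using this
  show ((stabK K n).subgroupOf K).index ≠ 0
  rw [hker]
  exact index_comap_ne_zero' _ Subgroup.index_ne_zero_of_finite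

/-- The canonical map from level-1 stabilizer in `K` to `psiImage K 1`. -/
noncomputable def psiHom (hGK : IsRegularBranch d G K) :
    ↥(stabK K 1) →* ↥(psiImage K 1) := by
  have mem : ∀ g : ↥(stabK K 1), g.1 ∈ LnSub K 1 → True := fun _ _ => trivial
  exact MonoidHom.mk' (fun g =>
    ⟨fun v => sectionPerm (hGK.treeAut g.1 (hGK.le g.2.1)) (g.2.2 v),
     ⟨g.1, g.2.1, g.2.2, fun v w => sectionPerm_spec _ _ _⟩⟩) (by
    intro a b
    apply Subtype.ext
    funext v
    refine (sectionPerm_unique (hGK.treeAut (a.1*b.1)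
      (hGK.le (K.mul_mem a.2.1 b.2.1))) ((a*b).2.2 v) (fun w => ?_)).symm
    show (a.1 * b.1) (v.1 ++ w) = _
    rw [Equiv.Perm.mul_apply, sectionPerm_spec (hGK.treeAut b.1 (hGK.le b.2.1)) (b.2.2 v) w,
      sectionPerm_spec (hGK.treeAut a.1 (hGK.le a.2.1)) (a.2.2 v)]
    rfl)

theorem relindex_L1_K (hGK : IsRegularBranch d G K) :
    (LnSub K 1).relIndex K ≠ 0 := by
  have h1 : (LnSub K 1).relIndex (stabK K 1) ≠ 0 := by
    have hcomap : (LnSub K 1).subgroupOf (stabK K 1) =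
        Subgroup.comap (psiHom hGK)
          ((Subgroup.pi Set.univ (fun _ : Level d 1 => K)).subgroupOf (psiImage K 1)) := by
      ext g
      simp only [Subgroup.mem_subgroupOf, Subgroup.mem_comap]
      rw [mem_LnSub]
      constructor
      · rintro ⟨hK, hfix, hsec⟩
        show _ ∈ Subgroup.pi Set.univ _
        rw [Subgroup.mem_pi Set.univ]
        intro v _
        obtain ⟨k, hk, hact⟩ := hsec v
        have : k = sectionPerm (hGK.treeAut g.1 (hGK.le g.2.1)) (g.2.2 v) :=
          sectionPerm_unique _ _ hact
        rwa [this] at hk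
      · intro h
        have h2 := (Subgroup.mem_pi Set.univ).mp h
        refine ⟨g.2.1, g.2.2, fun v => ?_⟩
        exact ⟨_, h2 v (Set.mem_univ v), fun w =>
          sectionPerm_spec (hGK.treeAut g.1 (hGK.le g.2.1)) (g.2.2 v) w⟩
    show ((LnSub K 1).subgroupOf (stabK K 1)).index ≠ 0
    rw [hcomap]
    exact index_comap_ne_zero' _ hGK.pi_relindex_ne_zero
  have hle1 : LnSub K 1 ≤ stabK K 1 := fun g hg => ⟨hg.1, hg.2.1⟩
  have hle2 : stabK K 1 ≤ K := fun g hg => hg.1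
  have := Subgroup.relIndex_mul_relIndex (LnSub K 1) (stabK K 1) K hle1 hle2
  rw [← this]
  exact mul_ne_zero h1 (relindex_stabK hGK 1)

end Index
section Index2
variable {d : ℕ} {G K : Subgroup (Equiv.Perm (Vtx d))}

theorem LnSub_succ_le (hd : 0 < d) (hGK : IsRegularBranch d G K) (n : ℕ) :
    LnSub K (n + 1) ≤ LnSub K n := by
  intro g hg
  obtain ⟨hK, hfix, hsec⟩ := mem_LnSub.mp hg
  have hgaut := hGK.treeAut g (hGK.le hK)
  have hfixn : ∀ v : Level d n, g v.1 = v.1 := fun v =>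
    treeaut_fix_short hd hgaut (fun u hu => hfix ⟨u, hu⟩) (by rw [v.2]; omega)
  refine ⟨hK, hfixn, fun v => ?_⟩
  have hx : ∀ x : Fin d, ∃ k ∈ K, ∀ w, g ((v.1 ++ [x]) ++ w) = (v.1 ++ [x]) ++ k w :=
    fun x => hsec ⟨v.1 ++ [x], by simp [v.2]⟩
  choose k hkK hkact using hx
  set t : Level d 1 → Equiv.Perm (Vtx d) := fun u =>
    k (u.1.head (by intro h; have h2 := u.2; rw [h] at h2; simp at h2)) with ht
  obtain ⟨h, hhK, hhfix, hhact⟩ := realize_tuple hGK t (fun u => hkK _)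
  refine ⟨h, hhK, fun w => ?_⟩
  match w with
  | [] =>
      have h0 : h [] = [] := (hGK.treeAut h (hGK.le hhK)).1
      simpa [h0] using hfixn v
  | x :: w' =>
      have h1 := hhact ⟨[x], rfl⟩ w'
      have hhead : t ⟨[x], rfl⟩ = k x := rfl
      rw [hhead] at h1
      have h2 := hkact x w'
      calc g (v.1 ++ x :: w') = g ((v.1 ++ [x]) ++ w') := by simp
        _ = (v.1 ++ [x]) ++ k x w' := h2
        _ = v.1 ++ ([x] ++ k x w') := by simp
        _ = v.1 ++ h ([x] ++ w') := by rw [h1]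
        _ = v.1 ++ h (x :: w') := rfl

theorem relindex_LnSub_succ (hd : 0 < d) (hGK : IsRegularBranch d G K) (n : ℕ) :
    (LnSub K (n + 1)).relIndex (LnSub K n) ≠ 0 := by
  classical
  set PK := Subgroup.pi Set.univ (fun _ : Level d n => K) with hPK
  have hrange : ∀ g : ↥(LnSub K n), secHom hGK n g ∈ PK := by
    intro g
    rw [hPK, Subgroup.mem_pi Set.univ]
    intro v _
    exact secTuple_mem_K hGK n g v
  set φ : ↥(LnSub K n) →* ↥PK := (secHom hGK n).codRestrict PK hrange with hφ
  have hcomap : (LnSub K (n + 1)).subgroupOf (LnSub K n) =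
      Subgroup.comap φ
        ((Subgroup.pi Set.univ (fun _ : Level d n => LnSub K 1)).subgroupOf PK) := by
    ext g
    simp only [Subgroup.mem_subgroupOf, Subgroup.mem_comap]
    constructor
    · intro hg1
      obtain ⟨hK1, hfix1, hsec1⟩ := mem_LnSub.mp hg1
      show _ ∈ Subgroup.pi Set.univ _
      rw [Subgroup.mem_pi Set.univ]
      intro v _
      have hsect : ∀ w, (φ g).1 v w = secTuple hGK n g v w := fun w => rfl
      refine ⟨secTuple_mem_K hGK n g v, fun u1 => ?_, fun u1 => ?_⟩
      · obtain ⟨x, hx⟩ := List.length_eq_one_iff.mp u1.2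
        have hlev : g.1 (v.1 ++ [x]) = v.1 ++ [x] := hfix1 ⟨v.1 ++ [x], by simp [v.2]⟩
        have := secTuple_spec hGK n g v [x]
        rw [hlev] at this
        have h3 := List.append_cancel_left this
        rw [hsect, hx, ← h3]
      · obtain ⟨x, hx⟩ := List.length_eq_one_iff.mp u1.2
        obtain ⟨kk, hkk, hkact⟩ := hsec1 ⟨v.1 ++ [x], by simp [v.2]⟩
        refine ⟨kk, hkk, fun w => ?_⟩
        have h4 := secTuple_spec hGK n g v ([x] ++ w)
        have h5 : g.1 (v.1 ++ ([x] ++ w)) = v.1 ++ ([x] ++ kk w) := by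
          have := hkact w
          simpa using this
        rw [h5] at h4
        have h6 := List.append_cancel_left h4
        rw [hsect, hx, ← h6]
    · intro hg1
      have h2 := (Subgroup.mem_pi Set.univ).mp hg1
      have hsecL1 : ∀ v : Level d n, secTuple hGK n g v ∈ LnSub K 1 :=
        fun v => h2 v (Set.mem_univ v)
      refine ⟨g.2.1, fun u => ?_, fun u => ?_⟩
      · obtain ⟨v, x, hvx⟩ := level_succ_decomp u
        have hf1 := (mem_LnSub.mp (hsecL1 v)).2.1 ⟨[x], rfl⟩
        have := secTuple_spec hGK n g v [x]
        rw [hvx, this, hf1]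
      · obtain ⟨v, x, hvx⟩ := level_succ_decomp u
        obtain ⟨kk, hkk, hkact⟩ := (mem_LnSub.mp (hsecL1 v)).2.2 ⟨[x], rfl⟩
        refine ⟨kk, hkk, fun w => ?_⟩
        have h4 := secTuple_spec hGK n g v ([x] ++ w)
        rw [hkact w] at h4
        rw [hvx]
        rw [List.append_assoc, h4, ← List.append_assoc]
  show ((LnSub K (n + 1)).subgroupOf (LnSub K n)).index ≠ 0
  rw [hcomap]
  apply index_comap_ne_zero'
  show ((Subgroup.pi Set.univ (fun _ : Level d n => LnSub K 1)).subgroupOf PK).index ≠ 0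
  exact relindex_pi_ne_zero (relindex_L1_K hGK)

theorem relindex_LnSub (hd : 0 < d) (hGK : IsRegularBranch d G K) (n : ℕ) :
    (LnSub K n).relIndex G ≠ 0 := by
  induction n with
  | zero =>
      have h1 : K ≤ LnSub K 0 := K_le_LnSub0 hGK
      have h2 : LnSub K 0 ≤ G := fun g hg => hGK.le hg.1
      have := Subgroup.relIndex_mul_relIndex K (LnSub K 0) G h1 h2
      intro h0
      rw [h0, Nat.mul_zero] at this
      exact hGK.relindex_ne_zero this.symm
  | succ n ih =>
      have h1 : LnSub K (n + 1) ≤ LnSub K n := LnSub_succ_le hd hGK n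
      have h2 : LnSub K n ≤ G := fun g hg => hGK.le hg.1
      have := Subgroup.relIndex_mul_relIndex (LnSub K (n + 1)) (LnSub K n) G h1 h2
      rw [← this]
      exact mul_ne_zero (relindex_LnSub_succ hd hGK n) ih

end Index2
section Prod
variable {d : ℕ} {G K : Subgroup (Equiv.Perm (Vtx d))}

theorem eq_one_of_trivial_everywhere (hd : 0 < d) {n : ℕ} {g : Equiv.Perm (Vtx d)}
    (hgaut : IsTreeAut d g) (hfix : ∀ v : Level d n, g v.1 = v.1)
    (htriv : ∀ v : Level d n, ∀ w, g (v.1 ++ w) = v.1 ++ w) : g = 1 := by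
  apply Equiv.ext
  intro u
  rcases le_or_gt u.length n with h | h
  · exact treeaut_fix_short hd hgaut (fun v hv => hfix ⟨v, hv⟩) h
  · have hu : u = u.take n ++ u.drop n := (List.take_append_drop n u).symm
    have hlen : (u.take n).length = n := by rw [List.length_take]; omega
    calc g u = g (u.take n ++ u.drop n) := by rw [← hu]
      _ = u.take n ++ u.drop n := htriv ⟨u.take n, hlen⟩ (u.drop n)
      _ = u := hu.symm

theorem LnSub_le_of_rists (hd : 0 < d) (hGK : IsRegularBranch d G K) (n : ℕ)
    (W : Subgroup (Equiv.Perm (Vtx d))) (hW : ∀ v : Level d n, rist G v.1 ≤ W) :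
    LnSub K n ≤ W := by
  classical
  suffices claim : ∀ (l : List (Level d n)) (g : Equiv.Perm (Vtx d)), g ∈ LnSub K n →
      (∀ v : Level d n, v ∉ l → ∀ w, g (v.1 ++ w) = v.1 ++ w) → g ∈ W by
    intro g hg
    exact claim (Finset.univ : Finset (Level d n)).toList g hg
      (fun v hv _ => absurd (Finset.mem_toList.mpr (Finset.mem_univ v)) hv)
  intro l
  induction l with
  | nil =>
      intro g hg htriv
      have : g = 1 := eq_one_of_trivial_everywhere hd
        (hGK.treeAut g (hGK.le hg.1)) hg.2.1 (fun v w => htriv v (fun h => List.not_mem_nil h) w)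
      rw [this]; exact W.one_mem
  | cons v l ih =>
      intro g hg htriv
      obtain ⟨hgK, hgfix, hgsec⟩ := mem_LnSub.mp hg
      obtain ⟨k, hkK, hkact⟩ := hgsec v
      obtain ⟨gv, hgvK, hgvact, hgvfix⟩ := ristK_realize hGK v.1 k hkK
      have hgvW : gv ∈ W := hW v ⟨hGK.le hgvK, fun w hw => hgvfix w hw⟩
      have hprefix_ne : ∀ u : Level d n, u ≠ v → ∀ w, ¬ v.1 <+: u.1 ++ w := by
        intro u hu w hpre
        have h1 : v.1 = (u.1 ++ w).take n := by
          rw [List.prefix_iff_eq_take] at hpre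
          have h2 := v.2
          rw [h2] at hpre
          exact hpre
        rw [List.take_append_of_le_length (by rw [u.2]), List.take_of_length_le (by rw [u.2])]
          at h1
        exact hu (Subtype.ext h1.symm)
      have hgv_mem : gv ∈ LnSub K n := by
        refine ⟨hgvK, fun u => ?_, fun u => ?_⟩
        · by_cases huv : u = v
          · subst huv
            have := hgvact []
            have hk0 : k [] = [] := (hGK.treeAut k (hGK.le hkK)).1
            simpa [hk0] using this
          · have := hgvfix u.1 (by
              intro hpre
              have := hprefix_ne u huv []
              simp at this
              exact this hpre)
            exact this
        · by_cases huv : u = v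
          · subst huv; exact ⟨k, hkK, hgvact⟩
          · exact ⟨1, K.one_mem, fun w => by
              rw [hgvfix _ (hprefix_ne u huv w)]; rfl⟩
      have hinv_act : ∀ w, gv⁻¹ (v.1 ++ w) = v.1 ++ k⁻¹ w := by
        intro w
        apply gv.injective
        rw [Equiv.Perm.apply_inv_self, hgvact (k⁻¹ w)]
        show v.1 ++ w = v.1 ++ k (k⁻¹ w)
        rw [Equiv.Perm.apply_inv_self]
      have hrest : gv⁻¹ * g ∈ W := by
        apply ih (gv⁻¹ * g) ((LnSub K n).mul_mem ((LnSub K n).inv_mem hgv_mem) hg)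
        intro u hu w
        by_cases huv : u = v
        · subst huv
          show gv⁻¹ (g (u.1 ++ w)) = u.1 ++ w
          rw [hkact w, hinv_act (k w)]
          simp
        · have hul : u ∉ v :: l := by
            intro hmem
            rcases List.mem_cons.mp hmem with h | h
            · exact huv h
            · exact hu h
          show gv⁻¹ (g (u.1 ++ w)) = u.1 ++ w
          rw [htriv u hul w]
          apply gv.injective
          rw [Equiv.Perm.apply_inv_self, hgvfix _ (hprefix_ne u huv w)]
      have : g = gv * (gv⁻¹ * g) := by group
      rw [this]
      exact W.mul_mem hgvW hrest

end Prod
section Zorn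
variable {d : ℕ} {G : Subgroup (Equiv.Perm (Vtx d))}

theorem exists_weaklyMaximal (hfg : Group.FG ↥G) {H : Subgroup (Equiv.Perm (Vtx d))}
    (hHG : H ≤ G) (hH : H.relIndex G = 0) :
    ∃ W, IsWeaklyMaximalIn G W ∧ H ≤ W := by
  classical
  set S : Set (Subgroup (Equiv.Perm (Vtx d))) :=
    {M | H ≤ M ∧ M ≤ G ∧ M.relIndex G = 0} with hS
  have hchain : ∀ c ⊆ S, IsChain (· ≤ ·) c → ∀ y ∈ c, ∃ ub ∈ S, ∀ z ∈ c, z ≤ ub := by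
    intro c hcS hc y hy
    set U := sSup c with hU
    have hdir : DirectedOn (· ≤ ·) c := hc.directedOn
    have hcne : c.Nonempty := ⟨y, hy⟩
    have hmemU : ∀ x, x ∈ U ↔ ∃ M ∈ c, x ∈ M := fun x =>
      Subgroup.mem_sSup_of_directedOn hcne hdir
    have hUG : U ≤ G := sSup_le (fun M hM => (hcS hM).2.1)
    refine ⟨U, ⟨(hcS hy).1.trans (le_sSup hy), hUG, ?_⟩, fun z hz => le_sSup hz⟩
    by_contra hne
    haveI : (U.subgroupOf G).FiniteIndex := ⟨hne⟩
    haveI : Group.FG ↥G := hfg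
    haveI hfgU : Group.FG ↥(U.subgroupOf G) := Subgroup.fg_of_index_ne_zero _
    obtain ⟨T, hTclosure, hTfin⟩ := Group.fg_iff.mp hfgU
    -- find a single member of the chain containing (the images of) all of T
    have hex : ∀ t : ↥(U.subgroupOf G), ∃ M ∈ c, (t.1 : Equiv.Perm (Vtx d)) ∈ M := by
      intro t
      have : (t.1 : Equiv.Perm (Vtx d)) ∈ U := t.2
      exact (hmemU _).mp this
    have hTMgen : ∀ (s : Set ↥(U.subgroupOf G)), s.Finite →
        ∃ M ∈ c, ∀ t ∈ s, (t.1 : Equiv.Perm (Vtx d)) ∈ M := by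
      intro s hs
      refine Set.Finite.induction_on (motive := fun s _ =>
        ∃ M ∈ c, ∀ t ∈ s, (t.1 : Equiv.Perm (Vtx d)) ∈ M) s hs ⟨y, hy, by simp⟩ ?_
      rintro a s ha hsf ⟨M, hMc, hMs⟩
      obtain ⟨Ma, hMac, hMaa⟩ := hex a
      obtain ⟨Mb, hMbc, h1, h2⟩ := hdir M hMc Ma hMac
      exact ⟨Mb, hMbc, by
        intro t ht
        rcases Set.mem_insert_iff.mp ht with rfl | hts
        · exact h2 hMaa
        · exact h1 (hMs t hts)⟩
    have hTM := hTMgen T hTfin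
    obtain ⟨M, hMc, hMT⟩ := hTM
    -- U ≤ M
    have hUM : U ≤ M := by
      intro u hu
      have huG : u ∈ G := hUG hu
      set ι : ↥(U.subgroupOf G) →* Equiv.Perm (Vtx d) :=
        (G.subtype.comp (U.subgroupOf G).subtype) with hι
      have himg : ∀ t ∈ T, ι t ∈ M := fun t ht => hMT t ht
      have hcl : (Subgroup.closure T).map ι ≤ M := by
        rw [MonoidHom.map_closure]
        apply (Subgroup.closure_le M).mpr
        rintro x ⟨t, ht, rfl⟩
        exact himg t ht
      have hu2 : (⟨⟨u, huG⟩, by rwa [Subgroup.mem_subgroupOf]⟩ : ↥(U.subgroupOf G)) ∈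
          Subgroup.closure T := by rw [hTclosure]; trivial
      exact hcl ⟨_, hu2, rfl⟩
    have : U = M := le_antisymm hUM (le_sSup hMc)
    rw [this] at hne
    exact hne (hcS hMc).2.2
  obtain ⟨W, hHW, hWS, hWmax⟩ := zorn_le_nonempty₀ S hchain H ⟨le_rfl, hHG, hH⟩
  refine ⟨W, ⟨hWS.2.1, hWS.2.2, ?_⟩, hHW⟩
  intro M hMG hWM h0
  have hMS : M ∈ S := ⟨hHW.trans hWM.le, hMG, h0⟩
  exact absurd (hWmax hMS hWM.le) (not_le_of_gt hWM)
end Zorn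
section Rays
variable {d : ℕ} {G K Q : Subgroup (Equiv.Perm (Vtx d))}

theorem treeaut_take' {g : Equiv.Perm (Vtx d)} (hg : IsTreeAut d g) (v : Vtx d) (n : ℕ) :
    g (v.take n) = (g v).take n := by
  rcases treeaut_take hg v n with h | h
  · exact h
  · rw [List.take_of_length_le h, List.take_of_length_le (by rw [treeaut_length hg]; exact h)]

theorem length_raySegment (ξ : ℕ → Fin d) (n : ℕ) : (raySegment ξ n).length = n := by
  simp [raySegment]

theorem raySegment_take (ξ : ℕ → Fin d) {n m : ℕ} (hnm : n ≤ m) :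
    (raySegment ξ m).take n = raySegment ξ n := by
  apply List.ext_get
  · simp [raySegment]; omega
  · intro i h1 h2
    simp [raySegment, List.getElem_take]

theorem raySegment_succ (ξ : ℕ → Fin d) (n : ℕ) :
    raySegment ξ (n + 1) = raySegment ξ n ++ [ξ n] := by
  rw [raySegment, List.ofFn_succ']
  simp [raySegment, List.concat_eq_append]

/-- The orbit of the level-`n` vertex of the ray `ξ` under `Q`. -/
def Rset (Q : Subgroup (Equiv.Perm (Vtx d))) (ξ : ℕ → Fin d) (n : ℕ) : Set (Vtx d) :=
  {w | ∃ q ∈ Q, q (raySegment ξ n) = w}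

theorem raySegment_mem_Rset (ξ : ℕ → Fin d) (n : ℕ) : raySegment ξ n ∈ Rset Q ξ n :=
  ⟨1, Q.one_mem, rfl⟩

theorem Rset_take (hGK : IsRegularBranch d G K) (hQG : Q ≤ G) (ξ : ℕ → Fin d)
    {n m : ℕ} (hnm : n ≤ m) {w : Vtx d} (hw : w ∈ Rset Q ξ m) :
    w.take n ∈ Rset Q ξ n := by
  obtain ⟨q, hqQ, rfl⟩ := hw
  refine ⟨q, hqQ, ?_⟩
  rw [← treeaut_take' (hGK.treeAut q (hQG hqQ)), raySegment_take ξ hnm]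

/-- Pointwise stabilizer of the `Q`-orbit of the ray `ξ` in `G`. -/
def Psub (G Q : Subgroup (Equiv.Perm (Vtx d))) (ξ : ℕ → Fin d) :
    Subgroup (Equiv.Perm (Vtx d)) where
  carrier := {g | g ∈ G ∧ ∀ n, ∀ w ∈ Rset Q ξ n, g w = w}
  one_mem' := ⟨G.one_mem, fun _ _ _ => rfl⟩
  mul_mem' := by
    rintro a b ⟨ha, ha2⟩ ⟨hb, hb2⟩
    exact ⟨G.mul_mem ha hb, fun n w hw => by
      rw [Equiv.Perm.mul_apply, hb2 n w hw, ha2 n w hw]⟩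
  inv_mem' := by
    rintro a ⟨ha, ha2⟩
    refine ⟨G.inv_mem ha, fun n w hw => ?_⟩
    conv_lhs => rw [← ha2 n w hw]
    exact Equiv.Perm.inv_apply_self a w

/-- Setwise stabilizer of the `Q`-orbit of the ray `ξ` in `G`. -/
def Hsub (G Q : Subgroup (Equiv.Perm (Vtx d))) (ξ : ℕ → Fin d) :
    Subgroup (Equiv.Perm (Vtx d)) where
  carrier := {g | g ∈ G ∧ ∀ n, g '' Rset Q ξ n = Rset Q ξ n}
  one_mem' := ⟨G.one_mem, fun n => by simp⟩
  mul_mem' := by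
    rintro a b ⟨ha, ha2⟩ ⟨hb, hb2⟩
    refine ⟨G.mul_mem ha hb, fun n => ?_⟩
    show (fun w => a (b w)) '' Rset Q ξ n = Rset Q ξ n
    rw [← Set.image_image, hb2 n, ha2 n]
  inv_mem' := by
    rintro a ⟨ha, ha2⟩
    refine ⟨G.inv_mem ha, fun n => ?_⟩
    ext x
    constructor
    · rintro ⟨z, hz, rfl⟩
      rw [← ha2 n] at hz
      obtain ⟨z', hz', rfl⟩ := hz
      simpa using hz'
    · intro hx
      refine ⟨a x, ?_, by simp⟩
      rw [← ha2 n]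
      exact ⟨x, hx, rfl⟩

theorem Psub_le_Hsub (ξ : ℕ → Fin d) : Psub G Q ξ ≤ Hsub G Q ξ := by
  rintro g ⟨hgG, hfix⟩
  refine ⟨hgG, fun n => ?_⟩
  ext x
  constructor
  · rintro ⟨z, hz, rfl⟩
    rw [hfix n z hz]; exact hz
  · intro hx
    exact ⟨x, hx, hfix n x hx⟩

theorem Q_le_Hsub (hQG : Q ≤ G) (ξ : ℕ → Fin d) : Q ≤ Hsub G Q ξ := by
  intro g hg
  refine ⟨hQG hg, fun n => ?_⟩
  ext x
  constructor
  · rintro ⟨z, ⟨q, hqQ, rfl⟩, rfl⟩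
    exact ⟨g * q, Q.mul_mem hg hqQ, rfl⟩
  · rintro ⟨q, hqQ, rfl⟩
    refine ⟨(g⁻¹ * q) (raySegment ξ n), ⟨g⁻¹ * q, Q.mul_mem (Q.inv_mem hg) hqQ, rfl⟩, ?_⟩
    show g (g⁻¹ (q (raySegment ξ n))) = _
    simp

theorem Hsub_le_G (ξ : ℕ → Fin d) : Hsub G Q ξ ≤ G := fun _ hg => hg.1

theorem relindex_Psub_G (hd2 : 2 ≤ d) (hGK : IsRegularBranch d G K)
    (Q : Subgroup (Equiv.Perm (Vtx d))) (ξ : ℕ → Fin d) :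
    (Psub G Q ξ).relIndex G = 0 := by
  by_contra hne
  have hfin : Finite (↥G ⧸ (Psub G Q ξ).subgroupOf G) := Nat.finite_of_card_ne_zero hne
  have key : ∀ n, d ^ n ≤ (Psub G Q ξ).relIndex G := by
    intro n
    let fmap : ↥G → Level d n := fun a => ⟨a.1 (raySegment ξ n), by
      rw [treeaut_length (hGK.treeAut a.1 a.2)]; exact length_raySegment ξ n⟩
    have hresp : ∀ a b : ↥G,
        @Setoid.r _ (QuotientGroup.leftRel ((Psub G Q ξ).subgroupOf G)) a b →
        fmap a = fmap b := by
      intro a b hab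
      rw [QuotientGroup.leftRel_apply] at hab
      rw [Subgroup.mem_subgroupOf] at hab
      apply Subtype.ext
      show a.1 (raySegment ξ n) = b.1 (raySegment ξ n)
      have hfix := hab.2 n (raySegment ξ n) (raySegment_mem_Rset ξ n)
      have : (a.1⁻¹ * b.1) (raySegment ξ n) = raySegment ξ n := hfix
      have h2 := congrArg a.1 this
      rw [Equiv.Perm.mul_apply] at h2
      rw [Equiv.Perm.apply_inv_self] at h2
      exact h2.symm
    let f : (↥G ⧸ (Psub G Q ξ).subgroupOf G) → Level d n :=
      fun x => Quotient.liftOn' x fmap hresp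
    have hsurj : Function.Surjective f := by
      intro v
      obtain ⟨g, hgG, hgv⟩ := hGK.transitive (raySegment ξ n) v.1
        (by rw [length_raySegment, v.2])
      exact ⟨Quotient.mk'' ⟨g, hgG⟩, Subtype.ext hgv⟩
    have hcard := Nat.card_le_card_of_surjective f hsurj
    rw [card_level] at hcard
    exact hcard
  have h1 := key ((Psub G Q ξ).relIndex G)
  have h2 := Nat.lt_two_pow_self (n := (Psub G Q ξ).relIndex G)
  have h3 := Nat.pow_le_pow_left hd2 ((Psub G Q ξ).relIndex G)
  omega

theorem rist_le_Psub (hGK : IsRegularBranch d G K) (hQG : Q ≤ G) {ξ : ℕ → Fin d} {n : ℕ}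
    {v : Vtx d} (hvlen : v.length = n) (hv : v ∉ Rset Q ξ n) :
    rist G v ≤ Psub G Q ξ := by
  rintro g ⟨hgG, hgfix⟩
  refine ⟨hgG, fun m w hw => ?_⟩
  apply hgfix
  intro hpre
  obtain ⟨q, hqQ, rfl⟩ := hw
  have hqaut := hGK.treeAut q (hQG hqQ)
  have hlenw : (q (raySegment ξ m)).length = m := by
    rw [treeaut_length hqaut]; exact length_raySegment ξ m
  have hnm : n ≤ m := by
    have := hpre.length_le
    rw [hvlen, hlenw] at this
    exact this
  have hveq : v = (q (raySegment ξ m)).take n := by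
    have h1 := List.prefix_iff_eq_take.mp hpre
    rw [hvlen] at h1
    exact h1
  rw [← treeaut_take' hqaut, raySegment_take ξ hnm] at hveq
  exact hv ⟨q, hqQ, hveq.symm⟩

end Rays
section Rays2
variable {d : ℕ} {G K Q : Subgroup (Equiv.Perm (Vtx d))}

theorem relindex_Psub_Hsub (hGK : IsRegularBranch d G K) (hQG : Q ≤ G)
    (hQfin : (Q : Set (Equiv.Perm (Vtx d))).Finite) (ξ : ℕ → Fin d) :
    (Psub G Q ξ).relIndex (Hsub G Q ξ) ≠ 0 := by
  classical
  haveI hQf : Finite ↥Q := hQfin.to_subtype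
  have hRsurj : ∀ n, Function.Surjective
      (fun q : ↥Q => (⟨q.1 (raySegment ξ n), ⟨q.1, q.2, rfl⟩⟩ : ↥(Rset Q ξ n))) := by
    rintro n ⟨w, q, hqQ, rfl⟩
    exact ⟨⟨q, hqQ⟩, rfl⟩
  haveI hRfin : ∀ n, Finite ↥(Rset Q ξ n) := fun n => Finite.of_surjective _ (hRsurj n)
  set c : ℕ → ℕ := fun n => Nat.card ↥(Rset Q ξ n) with hc
  have htsurj : ∀ {n m : ℕ} (hnm : n ≤ m), Function.Surjective
      (fun w : ↥(Rset Q ξ m) =>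
        (⟨w.1.take n, Rset_take hGK hQG ξ hnm w.2⟩ : ↥(Rset Q ξ n))) := by
    rintro n m hnm ⟨w, q, hqQ, rfl⟩
    refine ⟨⟨q (raySegment ξ m), ⟨q, hqQ, rfl⟩⟩, ?_⟩
    apply Subtype.ext
    show (q (raySegment ξ m)).take n = q (raySegment ξ n)
    rw [← treeaut_take' (hGK.treeAut q (hQG hqQ)), raySegment_take ξ hnm]
  have hmono : Monotone c := by
    intro n m hnm
    exact Nat.card_le_card_of_surjective _ (htsurj hnm)
  have hbdd : ∀ n, c n ≤ Nat.card ↥Q := fun n =>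
    Nat.card_le_card_of_surjective _ (hRsurj n)
  obtain ⟨N, hN⟩ := monotone_bdd_stab hmono hbdd
  -- fixing the orbit at level N pointwise implies fixing every level pointwise
  have keyfix : ∀ g ∈ Hsub G Q ξ, (∀ w ∈ Rset Q ξ N, g w = w) →
      ∀ m, ∀ w ∈ Rset Q ξ m, g w = w := by
    intro g hgH hfixN m
    have hgaut := hGK.treeAut g hgH.1
    rcases le_or_gt m N with hmN | hNm
    · intro w hw
      obtain ⟨q, hqQ, rfl⟩ := hw
      have hqQN : q (raySegment ξ N) ∈ Rset Q ξ N := ⟨q, hqQ, rfl⟩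
      have htk : (q (raySegment ξ N)).take m = q (raySegment ξ m) := by
        rw [← treeaut_take' (hGK.treeAut q (hQG hqQ)), raySegment_take ξ hmN]
      rw [← htk, treeaut_take' hgaut, hfixN _ hqQN]
    · -- m = N + k
      obtain ⟨k, rfl⟩ : ∃ k, m = N + k := ⟨m - N, by omega⟩
      clear hNm
      induction k with
      | zero => simpa using hfixN
      | succ k ih =>
          intro w hw
          have hgw : g w ∈ Rset Q ξ (N + k + 1) := by
            have himg := hgH.2 (N + k + 1)
            rw [← himg]
            exact ⟨w, by simpa [Nat.add_assoc] using hw, rfl⟩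
          set t : ↥(Rset Q ξ (N + k + 1)) → ↥(Rset Q ξ (N + k)) :=
            fun w => ⟨w.1.take (N + k), Rset_take hGK hQG ξ (by omega) w.2⟩ with htdef
          have hbij : Function.Bijective t := by
            rw [Nat.bijective_iff_surjective_and_card]
            constructor
            · exact htsurj (by omega)
            · show c (N + k + 1) = c (N + k)
              rw [hN (N + k + 1) (by omega), hN (N + k) (by omega)]
          have hw' : w ∈ Rset Q ξ (N + k + 1) := by simpa [Nat.add_assoc] using hw
          have htw : t ⟨g w, hgw⟩ = t ⟨w, hw'⟩ := by
            apply Subtype.ext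
            show (g w).take (N + k) = w.take (N + k)
            rw [← treeaut_take' hgaut]
            exact ih (w.take (N + k)) (Rset_take hGK hQG ξ (by omega) hw')
          have := hbij.1 htw
          have h2 : g w = w := congrArg Subtype.val this
          exact h2
  -- the action of `Hsub` on the finite set `Rset ξ N`
  haveI := hRfin N
  have hmemiff : ∀ (g : ↥(Hsub G Q ξ)) (x : Vtx d), x ∈ Rset Q ξ N →
      g.1 x ∈ Rset Q ξ N := by
    intro g x hx
    rw [← g.2.2 N]
    exact ⟨x, hx, rfl⟩
  have hmeminv : ∀ (g : ↥(Hsub G Q ξ)) (x : Vtx d), x ∈ Rset Q ξ N →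
      g.1⁻¹ x ∈ Rset Q ξ N := by
    intro g x hx
    rw [← g.2.2 N] at hx
    obtain ⟨z, hz, rfl⟩ := hx
    simpa using hz
  let α : ↥(Hsub G Q ξ) →* Equiv.Perm ↥(Rset Q ξ N) := MonoidHom.mk' (fun g =>
    { toFun := fun x => ⟨g.1 x.1, hmemiff g x.1 x.2⟩
      invFun := fun x => ⟨g.1⁻¹ x.1, hmeminv g x.1 x.2⟩
      left_inv := fun x => Subtype.ext (by simp)
      right_inv := fun x => Subtype.ext (by simp) }) (fun a b => Equiv.ext fun x => rfl)
  have hker : (Psub G Q ξ).subgroupOf (Hsub G Q ξ) = Subgroup.comap α ⊥ := by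
    ext g
    simp only [Subgroup.mem_subgroupOf, Subgroup.mem_comap, Subgroup.mem_bot]
    constructor
    · rintro ⟨hgG, hfixall⟩
      apply Equiv.ext
      intro x
      exact Subtype.ext (hfixall N x.1 x.2)
    · intro h
      refine ⟨g.2.1, fun m w hw => keyfix g.1 g.2 (fun w' hw' => ?_) m w hw⟩
      have := congrArg (fun e : Equiv.Perm ↥(Rset Q ξ N) => (e ⟨w', hw'⟩).1) h
      exact this
  show ((Psub G Q ξ).subgroupOf (Hsub G Q ξ)).index ≠ 0
  rw [hker]
  exact index_comap_ne_zero' _ Subgroup.index_ne_zero_of_finite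

theorem relindex_Hsub_G (hd2 : 2 ≤ d) (hGK : IsRegularBranch d G K) (hQG : Q ≤ G)
    (hQfin : (Q : Set (Equiv.Perm (Vtx d))).Finite) (ξ : ℕ → Fin d) :
    (Hsub G Q ξ).relIndex G = 0 := by
  by_contra hne
  have h1 := relindex_Psub_Hsub hGK hQG hQfin ξ
  have := Subgroup.relIndex_mul_relIndex (Psub G Q ξ) (Hsub G Q ξ) G
    (Psub_le_Hsub ξ) (Hsub_le_G ξ)
  rw [relindex_Psub_G hd2 hGK Q ξ] at this
  exact (mul_ne_zero h1 hne) this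

end Rays2
section Rays3
variable {d : ℕ} {G K Q : Subgroup (Equiv.Perm (Vtx d))}

theorem related_of_both (hd2 : 2 ≤ d) (hGK : IsRegularBranch d G K) (hQG : Q ≤ G)
    (hQfin : (Q : Set (Equiv.Perm (Vtx d))).Finite) {ξ ξ' : ℕ → Fin d}
    {W : Subgroup (Equiv.Perm (Vtx d))} (hWG : W ≤ G) (h0 : W.relIndex G = 0)
    (hP1 : Psub G Q ξ ≤ W) (hP2 : Psub G Q ξ' ≤ W) :
    ∃ q q' : ↥Q, ∀ n, q.1 (raySegment ξ n) = q'.1 (raySegment ξ' n) := by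
  classical
  haveI : Finite ↥Q := hQfin.to_subtype
  by_contra hnot
  push_neg at hnot
  have hdisj : ∃ n, ∀ w, w ∈ Rset Q ξ n → w ∉ Rset Q ξ' n := by
    by_contra hcap
    push_neg at hcap
    set A : ↥Q × ↥Q → Set ℕ := fun p =>
      {n | p.1.1 (raySegment ξ n) = p.2.1 (raySegment ξ' n)} with hA
    have hcover : (Set.univ : Set ℕ) ⊆ ⋃ p, A p := by
      intro n _
      obtain ⟨w, ⟨q, hqQ, hw1⟩, hww⟩ := hcap n
      obtain ⟨q', hq'Q, hw2⟩ := hww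
      exact Set.mem_iUnion.mpr ⟨(⟨q, hqQ⟩, ⟨q', hq'Q⟩), hw1.trans hw2.symm⟩
    have hAinf : ∃ p, (A p).Infinite := by
      by_contra hfin
      push_neg at hfin
      exact Set.infinite_univ ((Set.finite_iUnion hfin).subset hcover)
    obtain ⟨⟨q, q'⟩, hinf⟩ := hAinf
    have hdown : ∀ {m n : ℕ}, m ≤ n → n ∈ A (q, q') → m ∈ A (q, q') := by
      intro m n hmn hn
      have h1 : q.1 (raySegment ξ m) = (q.1 (raySegment ξ n)).take m := by
        rw [← treeaut_take' (hGK.treeAut q.1 (hQG q.2)), raySegment_take ξ hmn]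
      have h2 : q'.1 (raySegment ξ' m) = (q'.1 (raySegment ξ' n)).take m := by
        rw [← treeaut_take' (hGK.treeAut q'.1 (hQG q'.2)), raySegment_take ξ' hmn]
      show q.1 (raySegment ξ m) = q'.1 (raySegment ξ' m)
      rw [h1, h2]
      have hn' : q.1 (raySegment ξ n) = q'.1 (raySegment ξ' n) := hn
      rw [hn']
    have hall : ∀ n, q.1 (raySegment ξ n) = q'.1 (raySegment ξ' n) := by
      intro n
      obtain ⟨m, hm, hnm⟩ := hinf.exists_gt n
      exact hdown (le_of_lt hnm) hm
    obtain ⟨n, hne⟩ := hnot q q'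
    exact hne (hall n)
  obtain ⟨n, hn⟩ := hdisj
  have hrists : ∀ v : Level d n, rist G v.1 ≤ W := by
    intro v
    by_cases hv : v.1 ∈ Rset Q ξ n
    · exact (rist_le_Psub hGK hQG v.2 (hn v.1 hv)).trans hP2
    · exact (rist_le_Psub hGK hQG v.2 hv).trans hP1
  have hLn := LnSub_le_of_rists (by omega) hGK n W hrists
  have hmul := Subgroup.relIndex_mul_relIndex (LnSub K n) W G hLn hWG
  rw [h0, Nat.mul_zero] at hmul
  exact relindex_LnSub (by omega) hGK n hmul.symm

end Rays3
/-- In a finitely generated regular branch group `G`, for any finite subgroup `Q ≤ G` the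
set of weakly maximal subgroups of `G` containing `Q` is uncountable. -/
theorem uncountable_weaklyMaximal_containing {d : ℕ} (hd : 2 ≤ d)
    (G K : Subgroup (Equiv.Perm (Vtx d))) (hGK : IsRegularBranch d G K)
    (hfg : Group.FG G) (Q : Subgroup (Equiv.Perm (Vtx d))) (hQG : Q ≤ G)
    (hQfin : (Q : Set (Equiv.Perm (Vtx d))).Finite) :
    ¬ ({W : Subgroup (Equiv.Perm (Vtx d)) | IsWeaklyMaximalIn G W ∧ Q ≤ W}).Countable := by
  intro hS
  classical
  have hd0 : 0 < d := by omega
  haveI hQfQ : Finite ↥Q := hQfin.to_subtype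
  have hWex : ∀ ξ : ℕ → Fin d, ∃ W : Subgroup (Equiv.Perm (Vtx d)),
      (IsWeaklyMaximalIn G W ∧ Q ≤ W) ∧ Hsub G Q ξ ≤ W := by
    intro ξ
    obtain ⟨W, hW1, hW2⟩ := exists_weaklyMaximal hfg (Hsub_le_G ξ)
      (relindex_Hsub_G hd hGK hQG hQfin ξ)
    exact ⟨W, ⟨hW1, (Q_le_Hsub hQG ξ).trans hW2⟩, hW2⟩
  choose Wmap hWmem hWle using hWex
  set ERay : (ℕ → Fin d) → (↥Q × ↥Q) → (ℕ → Fin d) := fun ξ p n =>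
    (p.2.1⁻¹ (p.1.1 (raySegment ξ (n + 1)))).getLastD (ξ n) with hERay
  have hfiber : ∀ ξ ξ' : ℕ → Fin d, Wmap ξ = Wmap ξ' → ∃ p : ↥Q × ↥Q, ξ' = ERay ξ p := by
    intro ξ ξ' heq
    have h1 : Psub G Q ξ ≤ Wmap ξ := (Psub_le_Hsub ξ).trans (hWle ξ)
    have h2 : Psub G Q ξ' ≤ Wmap ξ := heq ▸ ((Psub_le_Hsub ξ').trans (hWle ξ'))
    obtain ⟨q, q', hrel⟩ := related_of_both hd hGK hQG hQfin
      ((hWmem ξ).1.1) ((hWmem ξ).1.2.1) h1 h2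
    refine ⟨(q, q'), funext fun n => ?_⟩
    have hseg : q'.1⁻¹ (q.1 (raySegment ξ (n + 1))) = raySegment ξ' (n + 1) := by
      rw [hrel (n + 1)]
      exact Equiv.Perm.inv_apply_self q'.1 (raySegment ξ' (n + 1))
    show ξ' n = ERay ξ (q, q') n
    rw [hERay]
    simp only
    rw [hseg, raySegment_succ]
    rw [List.getLastD_concat]
  have huniv : (Set.univ : Set (ℕ → Fin d)).Countable := by
    have hsub : (Set.univ : Set (ℕ → Fin d)) ⊆
        ⋃ W ∈ {W : Subgroup (Equiv.Perm (Vtx d)) | IsWeaklyMaximalIn G W ∧ Q ≤ W},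
          {ξ : ℕ → Fin d | Wmap ξ = W} := by
      intro ξ _
      exact Set.mem_biUnion (hWmem ξ) rfl
    refine Set.Countable.mono hsub ?_
    refine Set.Countable.biUnion hS ?_
    intro W hW
    rcases Set.eq_empty_or_nonempty {ξ : ℕ → Fin d | Wmap ξ = W} with he | ⟨ξ₀, hξ₀⟩
    · rw [he]; exact Set.countable_empty
    · refine Set.Countable.mono ?_ (Set.finite_range (ERay ξ₀)).countable
      intro ξ' hξ'
      obtain ⟨p, hp⟩ := hfiber ξ₀ ξ' (by rw [hξ₀, hξ'])
      exact ⟨p, hp.symm⟩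
  haveI hcount : Countable (ℕ → Fin d) := Set.countable_univ_iff.mp huniv
  haveI : Nonempty (ℕ → Fin d) := ⟨fun _ => ⟨0, hd0⟩⟩
  obtain ⟨s, hs⟩ := exists_surjective_nat (ℕ → Fin d)
  have hsurj2 : Function.Surjective (fun m => {k : ℕ | s m k = ⟨1, by omega⟩}) := by
    intro p
    obtain ⟨m, hm⟩ := hs (fun k => if k ∈ p then ⟨1, by omega⟩ else ⟨0, by omega⟩)
    refine ⟨m, ?_⟩
    ext k
    simp only [Set.mem_setOf_eq, hm]
    by_cases hk : k ∈ p <;> simp [hk, Fin.ext_iff]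
  exact Function.cantor_surjective _ hsurj2
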